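/- For all frequencies ξ, ξ₁, ξ₂, ξ₃ ∈ ℝ^d with ξ = ξ₁ - ξ₂ - ξ₃, and any σ ≥ 0, one has 1 - exp(-σ(|ξ₁| + |ξ₂| + |ξ₃| - |ξ|)) ≤ 12 σ ξ_med, where ξ_med denotes the median of the three numbers |ξ₁|, |ξ₂|, |ξ₃|. -/
import Mathlib


/-- The median of three real numbers. -/
noncomputable def median3 (a b c : ℝ) : ℝ := max (min a b) (min (max a b) c)

/-- For frequencies `ξ = ξ₁ - ξ₂ - ξ₃` in `ℝ^d` and `σ ≥ 0`,
`1 - exp (-σ(|ξ₁|+|ξ₂|+|ξ₃|-|ξ|)) ≤ 12 σ ξ_med` where `ξ_med` is the median of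
`|ξ₁|, |ξ₂|, |ξ₃|`. -/
theorem one_sub_exp_le_twelve_sigma_med {d : ℕ}
    (ξ ξ₁ ξ₂ ξ₃ : EuclideanSpace ℝ (Fin d)) (hξ : ξ = ξ₁ - ξ₂ - ξ₃)
    (σ : ℝ) (hσ : 0 ≤ σ) :
    1 - Real.exp (-(σ * (‖ξ₁‖ + ‖ξ₂‖ + ‖ξ₃‖ - ‖ξ‖))) ≤
      12 * σ * median3 ‖ξ₁‖ ‖ξ₂‖ ‖ξ₃‖ := by
  set a := ‖ξ₁‖ with ha
  set b := ‖ξ₂‖ with hb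
  set c := ‖ξ₃‖ with hc
  have h1 : a - b - c ≤ ‖ξ‖ := by
    calc a - b - c = ‖ξ₁‖ - ‖ξ₂‖ - ‖ξ₃‖ := rfl
      _ ≤ ‖ξ₁ - ξ₂‖ - ‖ξ₃‖ := by linarith [norm_sub_norm_le ξ₁ ξ₂]
      _ ≤ ‖ξ₁ - ξ₂ - ξ₃‖ := by linarith [norm_sub_norm_le (ξ₁ - ξ₂) ξ₃]
      _ = ‖ξ‖ := by rw [hξ]
  have h2 : b - a - c ≤ ‖ξ‖ := by
    have he : ξ₂ = ξ₁ - ξ₃ - ξ := by rw [hξ]; abel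
    have : ‖ξ₂‖ ≤ ‖ξ₁‖ + ‖ξ₃‖ + ‖ξ‖ := by
      rw [he]; calc ‖ξ₁ - ξ₃ - ξ‖ ≤ ‖ξ₁ - ξ₃‖ + ‖ξ‖ := norm_sub_le _ _
        _ ≤ ‖ξ₁‖ + ‖ξ₃‖ + ‖ξ‖ := by linarith [norm_sub_le ξ₁ ξ₃]
    linarith
  have h3 : c - a - b ≤ ‖ξ‖ := by
    have he : ξ₃ = ξ₁ - ξ₂ - ξ := by rw [hξ]; abel
    have : ‖ξ₃‖ ≤ ‖ξ₁‖ + ‖ξ₂‖ + ‖ξ‖ := by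
      rw [he]; calc ‖ξ₁ - ξ₂ - ξ‖ ≤ ‖ξ₁ - ξ₂‖ + ‖ξ‖ := norm_sub_le _ _
        _ ≤ ‖ξ₁‖ + ‖ξ₂‖ + ‖ξ‖ := by linarith [norm_sub_le ξ₁ ξ₂]
    linarith
  have hS : a + b + c - ‖ξ‖ ≤ 12 * median3 a b c := by
    have ha0 : 0 ≤ a := norm_nonneg _
    have hb0 : 0 ≤ b := norm_nonneg _
    have hc0 : 0 ≤ c := norm_nonneg _
    unfold median3
    rcases le_total a b with hab | hab <;>
      rcases le_total b c with hbc | hbc <;>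
      rcases le_total a c with hac | hac <;>
      simp [min_def, max_def, hab, hbc, hac] <;>
      linarith
  calc 1 - Real.exp (-(σ * (a + b + c - ‖ξ‖))) ≤ σ * (a + b + c - ‖ξ‖) := by
        linarith [Real.add_one_le_exp (-(σ * (a + b + c - ‖ξ‖)))]
    _ ≤ σ * (12 * median3 a b c) := mul_le_mul_of_nonneg_left hS hσ
    _ = 12 * σ * median3 a b c := by ring
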